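/- Let m ≥ 1, R > 1, and let (A_k)_{k≥0} be linear maps of ℝ^{m+1} with ‖A_k‖ < R. Let (e_k)_{k≥0} be unit vectors with A_k e_k = λ_k e_{k+1} where λ_k = ‖A_k e_k‖ > 0; let S_k be the orthogonal complement of e_k, Q_k the orthogonal projection onto S_k, B_k v = Q_{k+1}(A_k v) and D_k v = (I − Q_{k+1})(A_k v) for v ∈ S_k. Suppose: (a) there exists L₁ > 0 such that for every sequence (w_k^⊥ ∈ S_k)_{k≥0} with ‖w_k^⊥‖ ≤ 1 there exists (v_k^⊥ ∈ S_k)_{k≥0} with v_{k+1}^⊥ = B_k v_k^⊥ + w_{k+1}^⊥ and ‖v_k^⊥‖ ≤ L₁ for all k ≥ 0; (b) there exists L₂ > 0 such that for every real sequence (w_k^1)_{k≥0} with |w_k^1| ≤ 1 there exists a real sequence (v_k^1)_{k≥0} with v_{k+1}^1 = λ_k v_k^1 + w_{k+1}^1 and |v_k^1| ≤ L₂ for all k ≥ 0. Then for every sequence (w_k ∈ ℝ^{m+1})_{k≥0} with ‖w_k‖ ≤ 1 there exists (v_k ∈ ℝ^{m+1})_{k≥0} with v_{k+1} = A_k v_k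 + w_{k+1} and ‖v_k‖ ≤ L₂(L₁R + 1) + L₁ for all k ≥ 0. -/

import Mathlib

noncomputable section

abbrev Euc (m : ℕ) := EuclideanSpace ℝ (Fin m)

/-- The orthogonal complement `S k` of the unit vector `e k`. -/
def Sperp (m : ℕ) (e : ℕ → Euc m) (k : ℕ) : Submodule ℝ (Euc m) :=
  (ℝ ∙ e k)ᗮ

/-- The orthogonal projection of `Euc m` onto `S k`, as a map `Euc m → Euc m`. -/
def projS (m : ℕ) (e : ℕ → Euc m) (k : ℕ) : Euc m →L[ℝ] Euc m :=
  (Sperp m e k).subtypeL.comp (Submodule.orthogonalProjection (Sperp m e k))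

open RealInnerProductSpace in
/-- Decomposition of a vector into its `e k`-component and its `S k`-component. -/
lemma projS_decomp (m : ℕ) (e : ℕ → Euc m) (k : ℕ) (he : ‖e k‖ = 1) (x : Euc m) :
    projS m e k x + ⟪e k, x⟫ • e k = x := by
  have h := Submodule.starProjection_add_starProjection_orthogonal (K := ℝ ∙ e k) x
  have h2 := Submodule.starProjection_unit_singleton ℝ he x
  rw [h2] at h
  unfold projS Sperp
  rw [add_comm] at h
  exact h

/-- If the projected system `B k` and the one-dimensional system `λ k` both
have the bounded solution property on ℤ⁺, then so does the full system,
with the explicit bound `L₂(L₁R + 1) + L₁`. -/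
theorem bounded_solutions_from_triangular_structure
    (m : ℕ) (hm : 1 ≤ m) (R : ℝ) (hR : 1 < R)
    (A : ℕ → Euc (m + 1) →L[ℝ] Euc (m + 1)) (hAbound : ∀ k : ℕ, ‖A k‖ < R)
    (e : ℕ → Euc (m + 1)) (he : ∀ k : ℕ, ‖e k‖ = 1)
    (lam : ℕ → ℝ) (hlamdef : ∀ k : ℕ, lam k = ‖A k (e k)‖)
    (hlampos : ∀ k : ℕ, 0 < lam k)
    (herec : ∀ k : ℕ, A k (e k) = lam k • e (k + 1))
    (L₁ : ℝ) (hL₁ : 0 < L₁)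
    (ha : ∀ wp : ℕ → Euc (m + 1),
      (∀ k : ℕ, wp k ∈ Sperp (m + 1) e k) → (∀ k : ℕ, ‖wp k‖ ≤ 1) →
      ∃ vp : ℕ → Euc (m + 1),
        (∀ k : ℕ, vp k ∈ Sperp (m + 1) e k) ∧
        (∀ k : ℕ, vp (k + 1) = projS (m + 1) e (k + 1) (A k (vp k)) + wp (k + 1)) ∧
        (∀ k : ℕ, ‖vp k‖ ≤ L₁))
    (L₂ : ℝ) (hL₂ : 0 < L₂)
    (hb : ∀ w1 : ℕ → ℝ, (∀ k : ℕ, |w1 k| ≤ 1) →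
      ∃ v1 : ℕ → ℝ,
        (∀ k : ℕ, v1 (k + 1) = lam k * v1 k + w1 (k + 1)) ∧
        (∀ k : ℕ, |v1 k| ≤ L₂)) :
    ∀ w : ℕ → Euc (m + 1), (∀ k : ℕ, ‖w k‖ ≤ 1) →
      ∃ v : ℕ → Euc (m + 1),
        (∀ k : ℕ, v (k + 1) = A k (v k) + w (k + 1)) ∧
        (∀ k : ℕ, ‖v k‖ ≤ L₂ * (L₁ * R + 1) + L₁) := by
  intro w hw
  open RealInnerProductSpace in
  -- the projected part of w
  have hRpos : (0:ℝ) < R := lt_trans one_pos hR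
  have hC : (0:ℝ) < L₁ * R + 1 := by positivity
  set wp : ℕ → Euc (m + 1) := fun k => projS (m + 1) e k (w k) with hwp
  have hwpmem : ∀ k, wp k ∈ Sperp (m + 1) e k := fun k => by
    simp only [hwp, projS, ContinuousLinearMap.comp_apply, Submodule.subtypeL_apply]
    exact Submodule.coe_mem (Submodule.orthogonalProjection (Sperp (m + 1) e k) (w k))
  have hwpnorm : ∀ k, ‖wp k‖ ≤ 1 := by
    intro k
    have h1 : ‖wp k‖ ≤ ‖w k‖ := by
      have := Submodule.orthogonalProjectionOnto_norm_le (Sperp (m + 1) e k)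
      calc ‖wp k‖ = ‖(Submodule.orthogonalProjection (Sperp (m + 1) e k) (w k) : Euc (m+1))‖ := rfl
        _ ≤ ‖Submodule.orthogonalProjection (Sperp (m + 1) e k)‖ * ‖w k‖ :=
          (Submodule.orthogonalProjection (Sperp (m + 1) e k)).le_opNorm (w k)
        _ ≤ 1 * ‖w k‖ := by
          apply mul_le_mul_of_nonneg_right this (norm_nonneg _)
        _ = ‖w k‖ := one_mul _
    exact h1.trans (hw k)
  obtain ⟨vp, hvpmem, hvprec, hvpbd⟩ := ha wp hwpmem hwpnorm
  -- the scalar forcing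
  set w1 : ℕ → ℝ := fun k => Nat.rec 0
    (fun j _ => ⟪e (j + 1), A j (vp j) + w (j + 1)⟫ / (L₁ * R + 1)) k with hw1
  have hw1succ : ∀ k, w1 (k + 1) = ⟪e (k + 1), A k (vp k) + w (k + 1)⟫ / (L₁ * R + 1) :=
    fun k => rfl
  have hw1bd : ∀ k, |w1 k| ≤ 1 := by
    intro k
    cases k with
    | zero => simp [hw1]
    | succ j =>
      rw [hw1succ, abs_div, abs_of_pos hC, div_le_one hC]
      calc |⟪e (j + 1), A j (vp j) + w (j + 1)⟫|
          ≤ ‖e (j + 1)‖ * ‖A j (vp j) + w (j + 1)‖ := abs_real_inner_le_norm _ _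
        _ = ‖A j (vp j) + w (j + 1)‖ := by rw [he, one_mul]
        _ ≤ ‖A j (vp j)‖ + ‖w (j + 1)‖ := norm_add_le _ _
        _ ≤ L₁ * R + 1 := by
            have h1 : ‖A j (vp j)‖ ≤ ‖A j‖ * ‖vp j‖ := (A j).le_opNorm _
            have h2 : ‖A j‖ * ‖vp j‖ ≤ R * L₁ :=
              mul_le_mul (le_of_lt (hAbound j)) (hvpbd j) (norm_nonneg _)
                (le_of_lt hRpos)
            have := hw (j + 1)
            nlinarith
  obtain ⟨v1, hv1rec, hv1bd⟩ := hb w1 hw1bd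
  refine ⟨fun k => vp k + ((L₁ * R + 1) * v1 k) • e k, ?_, ?_⟩
  · intro k
    have hdec : ∀ x : Euc (m + 1),
        projS (m + 1) e (k + 1) x + ⟪e (k + 1), x⟫ • e (k + 1) = x :=
      fun x => projS_decomp (m + 1) e (k + 1) (he (k + 1)) x
    have hAvp := hdec (A k (vp k))
    have hwdec := hdec (w (k + 1))
    have hwpval : wp (k + 1) = w (k + 1) - ⟪e (k + 1), w (k + 1)⟫ • e (k + 1) := by
      rw [hwp]; rw [eq_sub_iff_add_eq]; exact hwdec
    have hcrec : (L₁ * R + 1) * v1 (k + 1)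
        = lam k * ((L₁ * R + 1) * v1 k) + ⟪e (k + 1), A k (vp k) + w (k + 1)⟫ := by
      rw [hv1rec k, hw1succ k]
      field_simp
    calc vp (k + 1) + ((L₁ * R + 1) * v1 (k + 1)) • e (k + 1)
        = projS (m + 1) e (k + 1) (A k (vp k)) + wp (k + 1)
            + ((L₁ * R + 1) * v1 (k + 1)) • e (k + 1) := by rw [hvprec k]
      _ = projS (m + 1) e (k + 1) (A k (vp k))
            + (w (k + 1) - ⟪e (k + 1), w (k + 1)⟫ • e (k + 1))
            + (lam k * ((L₁ * R + 1) * v1 k)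
               + ⟪e (k + 1), A k (vp k) + w (k + 1)⟫) • e (k + 1) := by
          rw [hwpval, hcrec]
      _ = (projS (m + 1) e (k + 1) (A k (vp k)) + ⟪e (k + 1), A k (vp k)⟫ • e (k + 1))
            + w (k + 1) + (lam k * ((L₁ * R + 1) * v1 k)) • e (k + 1) := by
          rw [inner_add_right]
          module
      _ = A k (vp k) + ((L₁ * R + 1) * v1 k) • (lam k • e (k + 1)) + w (k + 1) := by
          rw [hAvp, smul_smul]
          module
      _ = A k (vp k + ((L₁ * R + 1) * v1 k) • e k) + w (k + 1) := by
          rw [← herec k]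
          simp only [map_add, map_smul]
  · intro k
    calc ‖vp k + ((L₁ * R + 1) * v1 k) • e k‖
        ≤ ‖vp k‖ + ‖((L₁ * R + 1) * v1 k) • e k‖ := norm_add_le _ _
      _ = ‖vp k‖ + |(L₁ * R + 1) * v1 k| := by
          rw [norm_smul, he, mul_one, Real.norm_eq_abs]
      _ ≤ L₁ + (L₁ * R + 1) * L₂ := by
          have h1 := hvpbd k
          have h2 : |(L₁ * R + 1) * v1 k| ≤ (L₁ * R + 1) * L₂ := by
            rw [abs_mul, abs_of_pos hC]
            exact mul_le_mul_of_nonneg_left (hv1bd k) (le_of_lt hC)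
          linarith
      _ = L₂ * (L₁ * R + 1) + L₁ := by ring
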